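/- Let m = 1, l ≥ 1, and t ≥ 1 be integers, n = 1 + l, and let B_1, …, B_t be nonempty subsets of {1, …, l}. If |B_i| ≤ l − 1 for every 1 ≤ i ≤ t and there exists an index i_0 with |B_{i_0}| = l − 1, then the binary linear code C(D) is not a minimal code, i.e., there exists a nonzero codeword of C(D) that is not minimal. -/

import Mathlib

/-- Dot product on `F_2^m × F_2^l ≅ F_2^n` (`n = m + l`). -/
def dotp {m l : ℕ} (x d : (Fin m → ZMod 2) × (Fin l → ZMod 2)) : ZMod 2 :=
  (∑ j, x.1 j * d.1 j) + (∑ j, x.2 j * d.2 j)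

/-- `D_0 = {(β, γ) : β ≠ (1,…,1), γ ≠ 0}`. -/
def D0 (m l : ℕ) : Set ((Fin m → ZMod 2) × (Fin l → ZMod 2)) :=
  {d | d.1 ≠ (fun _ => 1) ∧ d.2 ≠ 0}

/-- The binary code `C(D)` with defining set `D` is minimal: for every `x` with
`c(x) ≠ 0` and every `x'` with `Suppt(c(x')) ⊆ Suppt(c(x))`, the codeword
`c(x')` equals `0` or `c(x)` (coordinatewise over `D`). -/
def IsMinimalCode {m l : ℕ} (D : Set ((Fin m → ZMod 2) × (Fin l → ZMod 2))) : Prop :=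
  ∀ x : (Fin m → ZMod 2) × (Fin l → ZMod 2),
    (∃ d ∈ D, dotp x d ≠ 0) →
    ∀ x' : (Fin m → ZMod 2) × (Fin l → ZMod 2),
      (∀ d ∈ D, dotp x' d ≠ 0 → dotp x d ≠ 0) →
      ((∀ d ∈ D, dotp x' d = 0) ∨ (∀ d ∈ D, dotp x' d = dotp x d))

/-- `D_1 = {((1,…,1), γ) : Suppt(γ) ⊄ B_i for every i}`. -/
def D1 (m : ℕ) {l t : ℕ} (B : Fin t → Finset (Fin l)) :
    Set ((Fin m → ZMod 2) × (Fin l → ZMod 2)) :=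
  {d | d.1 = (fun _ => 1) ∧ ∀ i : Fin t, ¬ ({j | d.2 j ≠ 0} ⊆ ↑(B i))}

/-- For `m = 1`, `l ≥ 1`, `t ≥ 1` and nonempty `B_1, …, B_t ⊆ {1,…,l}`:
if `|B_i| ≤ l - 1` for all `i` and some `|B_{i₀}| = l - 1`, then the binary code
`C(D)`, `D = D_0 ∪ D_1`, is not minimal. -/
theorem D_not_minimal_of_m_eq_one (m l t : ℕ) (hm : m = 1) (hl : 1 ≤ l) (ht : 1 ≤ t)
    (B : Fin t → Finset (Fin l)) (hB : ∀ i, (B i).Nonempty)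
    (hle : ∀ i, (B i).card ≤ l - 1) (hex : ∃ i₀, (B i₀).card = l - 1) :
    ¬ IsMinimalCode (D0 m l ∪ D1 m B) := by
  subst hm
  intro hmin
  obtain ⟨i₀, hi₀⟩ := hex
  have hcard : ∀ i, (B i).card < l := by
    intro i
    have h1 := (hB i).card_pos
    have := hle i
    omega
  have hc : (B i₀)ᶜ.card = 1 := by
    have h := Finset.card_compl (B i₀)
    rw [Fintype.card_fin] at h
    omega
  obtain ⟨j₀, hj₀⟩ := Finset.card_eq_one.mp hc
  have h2 : ∀ a : ZMod 2, a ≠ 0 → a = 1 := by decide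
  have hkey : ∀ γ : Fin l → ZMod 2, (∀ i, ¬ ({j | γ j ≠ 0} ⊆ ↑(B i))) → γ j₀ = 1 := by
    intro γ hγ
    obtain ⟨j, hj1, hj2⟩ := Set.not_subset.mp (hγ i₀)
    have hmem : j ∈ (B i₀)ᶜ := Finset.mem_compl.mpr hj2
    rw [hj₀, Finset.mem_singleton] at hmem
    subst hmem
    exact h2 _ hj1
  set e : Fin l → ZMod 2 := fun j => if j = j₀ then 1 else 0 with he
  set x : (Fin 1 → ZMod 2) × (Fin l → ZMod 2) := (0, e) with hx
  set x' : (Fin 1 → ZMod 2) × (Fin l → ZMod 2) := ((fun _ => 1), 0) with hx'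
  have hdx : ∀ d : (Fin 1 → ZMod 2) × (Fin l → ZMod 2), dotp x d = d.2 j₀ := by
    intro d
    simp [dotp, hx, he, ite_mul, one_mul, zero_mul, Finset.sum_ite_eq']
  have hdx' : ∀ d : (Fin 1 → ZMod 2) × (Fin l → ZMod 2), dotp x' d = d.1 0 := by
    intro d
    simp [dotp, hx', Fin.sum_univ_one]
  -- d₁ = ((1), all-ones) ∈ D1
  set d₁ : (Fin 1 → ZMod 2) × (Fin l → ZMod 2) := ((fun _ => 1), (fun _ => 1)) with hd₁
  have hd₁mem : d₁ ∈ D0 1 l ∪ D1 1 B := by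
    right
    refine ⟨rfl, fun i hsub => ?_⟩
    have hpos : 0 < (B i)ᶜ.card := by
      have h := Finset.card_compl (B i)
      rw [Fintype.card_fin] at h
      have := hcard i
      omega
    obtain ⟨j, hj⟩ := Finset.card_pos.mp hpos
    have hjB : j ∈ (B i : Set (Fin l)) := hsub (by simp [hd₁])
    exact (Finset.mem_compl.mp hj) hjB
  -- d₀ = (0, e) ∈ D0
  set d₀ : (Fin 1 → ZMod 2) × (Fin l → ZMod 2) := (0, e) with hd₀
  have hd₀mem : d₀ ∈ D0 1 l ∪ D1 1 B := by
    left
    constructor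
    · intro h
      have := congrFun h 0
      simp [hd₀] at this
    · intro h
      have := congrFun h j₀
      simp [hd₀, he] at this
  -- x is a nonzero codeword
  have hxnz : ∃ d ∈ D0 1 l ∪ D1 1 B, dotp x d ≠ 0 := by
    refine ⟨d₁, hd₁mem, ?_⟩
    rw [hdx]
    simp [hd₁]
  -- covering
  have hcov : ∀ d ∈ D0 1 l ∪ D1 1 B, dotp x' d ≠ 0 → dotp x d ≠ 0 := by
    intro d hd hne
    rw [hdx'] at hne
    rw [hdx]
    rcases hd with hd | hd
    · exfalso
      apply hd.1
      funext j
      have hj : j = 0 := Subsingleton.elim j 0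
      rw [hj]
      exact h2 _ hne
    · rw [hkey d.2 hd.2]
      exact one_ne_zero
  rcases hmin x hxnz x' hcov with h | h
  · have := h d₁ hd₁mem
    rw [hdx'] at this
    simp [hd₁] at this
  · have := h d₀ hd₀mem
    rw [hdx', hdx] at this
    simp [hd₀, he] at this
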